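/- Let X ~ N(μ, σ²) be a Gaussian random variable and B an event with P(B) > 0. Then E[X | B] ≤ μ + σ·sqrt(−2 ln P(B)). -/

import Mathlib

open MeasureTheory ProbabilityTheory NNReal
open scoped ENNReal

private lemma exp_mul_gaussianPDFReal (m t : ℝ) (v : ℝ≥0) (hv : v ≠ 0) (x : ℝ) :
    Real.exp (t * x) * gaussianPDFReal m v x
      = Real.exp (t * m + v * t ^ 2 / 2) * gaussianPDFReal (m + v * t) v x := by
  have hv' : (0:ℝ) < v := lt_of_le_of_ne v.coe_nonneg (by exact_mod_cast (Ne.symm hv))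
  simp only [gaussianPDFReal]
  rw [mul_left_comm, mul_left_comm (Real.exp _), ← Real.exp_add, ← Real.exp_add]
  congr 2
  field_simp
  ring

private lemma gaussianReal_withDensity' (m : ℝ) (v : ℝ≥0) (hv : v ≠ 0) :
    gaussianReal m v
      = volume.withDensity fun x => ((gaussianPDFReal m v x).toNNReal : ℝ≥0∞) := by
  rw [gaussianReal_of_var_ne_zero _ hv]
  rfl

private lemma integral_gaussianReal_eq (m : ℝ) (v : ℝ≥0) (hv : v ≠ 0) (g : ℝ → ℝ) :
    ∫ x, g x ∂(gaussianReal m v) = ∫ x, gaussianPDFReal m v x * g x := by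
  rw [gaussianReal_withDensity' m v hv,
    integral_withDensity_eq_integral_smul (measurable_gaussianPDFReal m v).real_toNNReal g]
  refine integral_congr_ae (ae_of_all _ fun x => ?_)
  simp [NNReal.smul_def, Real.coe_toNNReal _ (gaussianPDFReal_nonneg m v x)]

private lemma integrable_gaussianReal_iff (m : ℝ) (v : ℝ≥0) (hv : v ≠ 0) {g : ℝ → ℝ} :
    Integrable g (gaussianReal m v) ↔ Integrable (fun x => gaussianPDFReal m v x * g x) volume := by
  rw [gaussianReal_withDensity' m v hv,
    integrable_withDensity_iff_integrable_smul (measurable_gaussianPDFReal m v).real_toNNReal]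
  exact integrable_congr (ae_of_all _ fun x => by
    simp [NNReal.smul_def, Real.coe_toNNReal _ (gaussianPDFReal_nonneg m v x)])

private lemma integral_exp_gaussianReal' (m t : ℝ) (v : ℝ≥0) (hv : v ≠ 0) :
    ∫ x, Real.exp (t * x) ∂(gaussianReal m v) = Real.exp (t * m + v * t ^ 2 / 2) := by
  rw [integral_gaussianReal_eq m v hv]
  have h : ∀ x, gaussianPDFReal m v x * Real.exp (t * x)
      = Real.exp (t * m + v * t ^ 2 / 2) * gaussianPDFReal (m + v * t) v x := fun x => by
    rw [mul_comm, exp_mul_gaussianPDFReal m t v hv x]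
  simp_rw [h, integral_const_mul, integral_gaussianPDFReal_eq_one _ hv, mul_one]

private lemma integrable_exp_gaussianReal' (m t : ℝ) (v : ℝ≥0) (hv : v ≠ 0) :
    Integrable (fun x => Real.exp (t * x)) (gaussianReal m v) := by
  rw [integrable_gaussianReal_iff m v hv]
  have h : (fun x => gaussianPDFReal m v x * Real.exp (t * x))
      = fun x => Real.exp (t * m + v * t ^ 2 / 2) * gaussianPDFReal (m + v * t) v x := by
    funext x; rw [mul_comm, exp_mul_gaussianPDFReal m t v hv x]
  rw [h]
  exact (integrable_gaussianPDFReal _ _).const_mul _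

private lemma integrable_id_gaussianReal' (m : ℝ) (v : ℝ≥0) (hv : v ≠ 0) :
    Integrable (fun x : ℝ => x) (gaussianReal m v) := by
  have h1 := integrable_exp_gaussianReal' m 1 v hv
  have h2 := integrable_exp_gaussianReal' m (-1) v hv
  refine (h1.add h2).mono measurable_id.aestronglyMeasurable (ae_of_all _ fun x => ?_)
  simp only [Real.norm_eq_abs, Pi.add_apply, one_mul, neg_one_mul]
  rw [abs_of_nonneg (by positivity : (0:ℝ) ≤ Real.exp x + Real.exp (-x))]
  have e1 := Real.add_one_le_exp x
  have e2 := Real.add_one_le_exp (-x)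
  have p1 := Real.exp_pos x
  have p2 := Real.exp_pos (-x)
  rcases abs_cases x with ⟨h, _⟩ | ⟨h, _⟩ <;> rw [h] <;> linarith

/-- if `X ~ N(μ, σ²)` and `B` is an event with `P(B) > 0`, then
`E[X | B] ≤ μ + σ sqrt(−2 ln P(B))`. -/
theorem stmt_3 {Ω : Type*} [MeasurableSpace Ω] (P : Measure Ω) [IsProbabilityMeasure P]
    (X : Ω → ℝ) (hXm : Measurable X) (m : ℝ) (σ : ℝ≥0)
    (hGauss : Measure.map X P = gaussianReal m (σ ^ 2))
    (B : Set Ω) (hB : MeasurableSet B) (hBpos : 0 < P B) :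
    ∫ ω, X ω ∂(P[|B]) ≤ m + σ * Real.sqrt (-2 * Real.log (P B).toReal) := by
  have hPBne : P B ≠ 0 := hBpos.ne'
  have hPBtop : P B ≠ ⊤ := (measure_lt_top P B).ne
  set p : ℝ := (P B).toReal with hp_def
  have hp_pos : 0 < p := ENNReal.toReal_pos hPBne hPBtop
  have hp_le_one : p ≤ 1 := by
    simpa using ENNReal.toReal_mono (by simp) (prob_le_one (μ := P) (s := B))
  haveI : IsProbabilityMeasure (P[|B]) := cond_isProbabilityMeasure hPBne
  have hcond : P[|B] = (P B)⁻¹ • P.restrict B := rfl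
  by_cases hσ : σ = 0
  · -- degenerate case: X = m a.s.
    subst hσ
    have hmap : Measure.map X P = Measure.dirac m := by
      simpa using hGauss
    have hXae : ∀ᵐ ω ∂P, X ω = m := by
      have h0 : P (X ⁻¹' {m}ᶜ) = 0 := by
        rw [← Measure.map_apply hXm (measurableSet_singleton m).compl, hmap,
          Measure.dirac_apply' _ (measurableSet_singleton m).compl]
        simp
      refine (measure_eq_zero_iff_ae_notMem.mp h0).mono fun ω h => ?_
      simpa using h
    have hXaeB : ∀ᵐ ω ∂(P[|B]), X ω = m := cond_absolutelyContinuous.ae_le hXae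
    rw [integral_congr_ae hXaeB]
    simp
  · -- nondegenerate case
    have hv : (σ ^ 2 : ℝ≥0) ≠ 0 := pow_ne_zero _ hσ
    have hσpos : (0:ℝ) < σ := by
      exact_mod_cast lt_of_le_of_ne σ.coe_nonneg (by exact_mod_cast (Ne.symm hσ))
    set I : ℝ := ∫ ω, X ω ∂(P[|B]) with hI_def
    have hXint : Integrable X P := by
      have h := integrable_id_gaussianReal' m (σ ^ 2) hv
      rw [← hGauss] at h
      exact (integrable_map_measure aestronglyMeasurable_id hXm.aemeasurable).mp h
    have hXintB : Integrable X (P[|B]) := by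
      rw [hcond]
      exact hXint.restrict.smul_measure (by simp [hPBne])
    have hkey : ∀ β : ℝ, 0 < β → I ≤ m + (σ:ℝ)^2 * β / 2 + (-Real.log p) / β := by
      intro β hβ
      have hexpint : Integrable (fun ω => Real.exp (β * X ω)) P := by
        have h := integrable_exp_gaussianReal' m β (σ ^ 2) hv
        rw [← hGauss] at h
        exact (integrable_map_measure h.aestronglyMeasurable hXm.aemeasurable).mp h
      have hexpintB : Integrable (fun ω => Real.exp (β * X ω)) (P[|B]) := by
        rw [hcond]
        exact hexpint.restrict.smul_measure (by simp [hPBne])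
      -- Jensen
      have hjen : Real.exp (∫ ω, β * X ω ∂(P[|B])) ≤ ∫ ω, Real.exp (β * X ω) ∂(P[|B]) := by
        refine convexOn_exp.map_integral_le Real.continuous_exp.continuousOn isClosed_univ
          (ae_of_all _ fun ω => Set.mem_univ _) (hXintB.const_mul β) ?_
        exact hexpintB
      rw [integral_const_mul] at hjen
      -- bound conditional expectation of exp by unconditional / p
      have hmgf : ∫ ω, Real.exp (β * X ω) ∂P
          = Real.exp (β * m + (σ:ℝ)^2 * β ^ 2 / 2) := by
        have h := integral_exp_gaussianReal' m β (σ ^ 2) hv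
        rw [← hGauss] at h
        have hgm : AEStronglyMeasurable (fun x : ℝ => Real.exp (β * x)) (Measure.map X P) :=
          (Real.measurable_exp.comp (measurable_const_mul β)).aestronglyMeasurable
        rw [integral_map hXm.aemeasurable hgm] at h
        simpa using h
      have hbound : ∫ ω, Real.exp (β * X ω) ∂(P[|B])
          ≤ p⁻¹ * Real.exp (β * m + (σ:ℝ)^2 * β ^ 2 / 2) := by
        rw [hcond, integral_smul_measure, ENNReal.toReal_inv, smul_eq_mul, ← hp_def, ← hmgf]
        refine mul_le_mul_of_nonneg_left ?_ (by positivity)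
        exact setIntegral_le_integral hexpint (ae_of_all _ fun ω => (Real.exp_pos _).le)
      have hexpform : p⁻¹ * Real.exp (β * m + (σ:ℝ)^2 * β ^ 2 / 2)
          = Real.exp (β * m + (σ:ℝ)^2 * β ^ 2 / 2 - Real.log p) := by
        rw [Real.exp_sub, Real.exp_log hp_pos]; ring
      have h1 : Real.exp (β * I) ≤ Real.exp (β * m + (σ:ℝ)^2 * β ^ 2 / 2 - Real.log p) := by
        rw [← hexpform]
        exact hjen.trans hbound
      have h2 : β * I ≤ β * m + (σ:ℝ)^2 * β ^ 2 / 2 - Real.log p := Real.exp_le_exp.mp h1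
      have hI2 : I ≤ (β * m + (σ:ℝ)^2 * β ^ 2 / 2 - Real.log p) / β := by
        rw [le_div_iff₀ hβ]; linarith
      have heq : (β * m + (σ:ℝ)^2 * β ^ 2 / 2 - Real.log p) / β
          = m + (σ:ℝ)^2 * β / 2 + (-Real.log p) / β := by
        field_simp
        ring
      rwa [heq] at hI2
    by_cases hL : Real.log p = 0
    · have hfae : ∀ ε > (0:ℝ), I ≤ m + ε := by
        intro ε hε
        have hβ : (0:ℝ) < 2 * ε / (σ:ℝ)^2 := by positivity
        have h := hkey _ hβ
        rw [hL] at h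
        have heq2 : (σ:ℝ)^2 * (2 * ε / (σ:ℝ)^2) / 2 = ε := by field_simp
        rw [heq2] at h
        simpa using h
      simpa [hL] using le_of_forall_pos_le_add hfae
    · have hlogneg : Real.log p < 0 :=
        lt_of_le_of_ne (Real.log_nonpos hp_pos.le hp_le_one) hL
      set l : ℝ := Real.sqrt (-2 * Real.log p) with hl_def
      have hl2 : l ^ 2 = -2 * Real.log p := Real.sq_sqrt (by linarith)
      have hlpos : 0 < l := Real.sqrt_pos.mpr (by linarith)
      have hβ : (0:ℝ) < l / σ := by positivity
      have h := hkey _ hβ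
      have heq : (σ:ℝ)^2 * (l / σ) / 2 + (-Real.log p) / (l / σ) = σ * l := by
        have hσne : (σ:ℝ) ≠ 0 := hσpos.ne'
        have hlne : l ≠ 0 := hlpos.ne'
        field_simp
        nlinarith [hl2]
      linarith
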